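/- arXiv:1302.6346 — 2 statements merged into one kernel-verified Lean document; each statement's English description precedes it below -/
import Mathlib

section
/- If f is an and-net (conjunctive Boolean network) and is even-self-dual or odd-self-dual, then its global interaction graph G(f) is a single cycle spanning all vertices; the cycle is positive if f is even and negative if f is odd. -/
/-- The conjugate of `f`: `x ↦ f(x) ⊕ x`. -/
def conjNet {W : Type*} (f : (W → Bool) → (W → Bool)) : (W → Bool) → (W → Bool) :=
  fun x i => xor (f x i) (x i)

/-- `f` is self-dual: `f(x ⊕ 1) = f(x) ⊕ 1`. -/
def SelfDual {W : Type*} (f : (W → Bool) → (W → Bool)) : Prop :=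
  ∀ x, f (fun i => !(x i)) = fun i => !(f x i)

/-- A point has even parity if its number of `true` components is even. -/
def EvenPt {W : Type*} [Fintype W] (x : W → Bool) : Prop :=
  Even ((Finset.univ.filter (fun i => x i = true)).card)

/-- `f` is even: the image of its conjugate is exactly the set of even-parity points. -/
def IsEvenNet {W : Type*} [Fintype W] (f : (W → Bool) → (W → Bool)) : Prop :=
  Set.range (conjNet f) = {x | EvenPt x}

/-- `f` is odd: the image of its conjugate is exactly the set of odd-parity points. -/
def IsOddNet {W : Type*} [Fintype W] (f : (W → Bool) → (W → Bool)) : Prop :=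
  Set.range (conjNet f) = {x | ¬ EvenPt x}

/-- `f` is non-expansive for the Hamming distance. -/
def NonExpansive {W : Type*} [Fintype W] [DecidableEq W]
    (f : (W → Bool) → (W → Bool)) : Prop :=
  ∀ x y : W → Bool, hammingDist (f x) (f y) ≤ hammingDist x y

/-- Positive arc `j → i` in the global interaction graph of `f`. -/
def globalPos {W : Type*} [DecidableEq W] (f : (W → Bool) → (W → Bool)) (j i : W) : Prop :=
  ∃ x, f (Function.update x j true) i = true ∧ f (Function.update x j false) i = false

/-- Negative arc `j → i` in the global interaction graph of `f`. -/
def globalNeg {W : Type*} [DecidableEq W] (f : (W → Bool) → (W → Bool)) (j i : W) : Prop :=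
  ∃ x, f (Function.update x j true) i = false ∧ f (Function.update x j false) i = true

/-- The global interaction graph of `f` is a directed cycle spanning all vertices
(each vertex has in- and out-degree one): its arcs are exactly the arcs `σ i → i`,
with sign given by `s i` (`true` meaning negative). The permutation `σ` is required
to be a single cycle on all of `W`. -/
def IsCircularWith {W : Type*} [Fintype W] [DecidableEq W]
    (f : (W → Bool) → (W → Bool)) (σ : Equiv.Perm W) (s : W → Bool) : Prop :=
  (∀ i j : W, ∃ n : ℕ, (σ ^ n) i = j) ∧
  (∀ i j : W, globalPos f j i ↔ (j = σ i ∧ s i = false)) ∧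
  (∀ i j : W, globalNeg f j i ↔ (j = σ i ∧ s i = true))

/-- Number of negative arcs of a circular network with signs `s`. -/
def negCount {W : Type*} [Fintype W] (s : W → Bool) : ℕ :=
  (Finset.univ.filter (fun i => s i = true)).card

/-- `f` is an and-net: there is a simple signed digraph on `V` such that each `f_i`
is the conjunction of its positive inputs and negated negative inputs. -/
def IsAndNet {W : Type*} (f : (W → Bool) → (W → Bool)) : Prop :=
  ∃ pos neg : W → W → Prop, (∀ j i, ¬ (pos j i ∧ neg j i)) ∧
    ∀ x i, f x i = true ↔ (∀ j, pos j i → x j = true) ∧ (∀ j, neg j i → x j = false)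

/- ----------------------------------------------------------------- -/
/- Auxiliary lemmas                                                  -/
/- ----------------------------------------------------------------- -/

private lemma aux_zmod2 : ∀ a b : ZMod 2, a + b + a = b := by decide

private lemma aux_zmod2_cases : ∀ a : ZMod 2, a = 0 ∨ a = 1 := by decide

private lemma aux_sum_xor3 {W : Type*} (t : Finset W) (a b c : W → Bool) :
    (∑ i ∈ t, if xor (xor (a i) (b i)) (c i) = true then (1 : ZMod 2) else 0) =
      (∑ i ∈ t, if a i = true then (1 : ZMod 2) else 0) +
        (∑ i ∈ t, if b i = true then (1 : ZMod 2) else 0) +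
        (∑ i ∈ t, if c i = true then (1 : ZMod 2) else 0) := by
  rw [← Finset.sum_add_distrib, ← Finset.sum_add_distrib]
  refine Finset.sum_congr rfl fun i _ => ?_
  cases a i <;> cases b i <;> cases c i <;> decide

private lemma aux_sum_single {W : Type*} [DecidableEq W] (t : Finset W) (a : W) :
    (∑ v ∈ t, if (decide (v = a)) = true then (1 : ZMod 2) else 0) =
      if a ∈ t then 1 else 0 := by
  simp only [decide_eq_true_eq]
  exact Finset.sum_ite_eq' t a fun _ => (1 : ZMod 2)

private lemma aux_evenPt_iff {W : Type*} [Fintype W] (x : W → Bool) :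
    EvenPt x ↔ (∑ i, if x i = true then (1 : ZMod 2) else 0) = 0 := by
  unfold EvenPt
  rw [Finset.sum_boole, ZMod.natCast_eq_zero_iff]
  exact even_iff_two_dvd

/-- If `f` is an and-net which is even-self-dual or odd-self-dual, then its global
interaction graph is a single cycle spanning all vertices, positive if `f` is even
and negative if `f` is odd. -/
theorem stmt_18 {V : Type*} [Fintype V] [DecidableEq V]
    (f : (V → Bool) → (V → Bool))
    (hand : IsAndNet f) (hsd : SelfDual f) (heo : IsEvenNet f ∨ IsOddNet f) :
    ∃ (σ : Equiv.Perm V) (s : V → Bool), IsCircularWith f σ s ∧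
      (IsEvenNet f → Even (negCount s)) ∧ (IsOddNet f → Odd (negCount s)) := by
  classical
  obtain ⟨pos, neg, hne, hspec⟩ := hand
  -- Step 1: each coordinate of `f` is a (possibly negated) copy of a single input.
  have hval : ∀ i, ∃ j, ∃ b, ∀ x, f x i = xor (x j) b := by
    intro i
    have hinput : ∃ j, pos j i ∨ neg j i := by
      by_contra h
      push_neg at h
      have h1 : ∀ x : V → Bool, f x i = true := fun x =>
        (hspec x i).2 ⟨fun j hj => absurd hj (h j).1, fun j hj => absurd hj (h j).2⟩
      have h2 := congrFun (hsd fun _ => false) i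
      rw [h1, h1] at h2
      exact absurd h2 (by simp)
    have huniq : ∀ j k, (pos j i ∨ neg j i) → (pos k i ∨ neg k i) → j = k := by
      intro j k hj hk
      by_contra hjk
      set bj := if pos j i then true else false with hbj
      set bk := if pos k i then false else true with hbk
      set x : V → Bool := fun v => if v = j then bj else if v = k then bk else false with hx
      have hxj : x j = bj := by simp [hx]
      have hxk : x k = bk := by simp [hx, Ne.symm hjk]
      have hfx : f x i = false := by
        rw [← Bool.not_eq_true, hspec]
        rintro ⟨h1, h2⟩
        rcases hk with hp | hn
        · have := h1 k hp
          rw [hxk, hbk, if_pos hp] at this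
          exact absurd this (by simp)
        · have hnp : ¬pos k i := fun hp => hne k i ⟨hp, hn⟩
          have := h2 k hn
          rw [hxk, hbk, if_neg hnp] at this
          exact absurd this (by simp)
      have hfnx : f (fun v => !(x v)) i = false := by
        rw [← Bool.not_eq_true, hspec]
        rintro ⟨h1, h2⟩
        rcases hj with hp | hn
        · have := h1 j hp
          simp only [hxj, hbj, if_pos hp] at this
          exact absurd this (by simp)
        · have hnp : ¬pos j i := fun hp => hne j i ⟨hp, hn⟩
          have := h2 j hn
          simp only [hxj, hbj, if_neg hnp] at this
          exact absurd this (by simp)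
      have key := congrFun (hsd x) i
      simp only [hfx, hfnx] at key
      exact absurd key (by simp)
    obtain ⟨j, hj⟩ := hinput
    refine ⟨j, if neg j i then true else false, fun x => ?_⟩
    rcases hj with hp | hn
    · have hnn : ¬neg j i := fun h => hne j i ⟨hp, h⟩
      rw [if_neg hnn]
      cases hxj : x j
      · have hnt : f x i ≠ true := by
          intro hgt
          obtain ⟨h1, _⟩ := (hspec x i).1 hgt
          rw [h1 j hp] at hxj
          exact absurd hxj (by simp)
        have hff : f x i = false := by
          cases h : f x i
          · rfl
          · exact absurd h hnt
        simp [hxj, hff]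
      · have hft : f x i = true := (hspec x i).2
          ⟨fun k hk => by rw [huniq k j (Or.inl hk) (Or.inl hp)]; exact hxj,
           fun k hk => absurd (huniq k j (Or.inr hk) (Or.inl hp) ▸ hk) hnn⟩
        simp [hxj, hft]
    · have hnp : ¬pos j i := fun h => hne j i ⟨h, hn⟩
      rw [if_pos hn]
      cases hxj : x j
      · have hft : f x i = true := (hspec x i).2
          ⟨fun k hk => absurd (huniq k j (Or.inl hk) (Or.inr hn) ▸ hk) hnp,
           fun k hk => by rw [huniq k j (Or.inr hk) (Or.inr hn)]; exact hxj⟩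
        simp [hxj, hft]
      · have hnt : f x i ≠ true := by
          intro hgt
          obtain ⟨_, h2⟩ := (hspec x i).1 hgt
          rw [h2 j hn] at hxj
          exact absurd hxj (by simp)
        have hff : f x i = false := by
          cases h : f x i
          · rfl
          · exact absurd h hnt
        simp [hxj, hff]
  choose τ s hτs using hval
  have hconj : ∀ x, conjNet f x = fun i => xor (xor (x (τ i)) (s i)) (x i) := by
    intro x
    funext i
    show xor (f x i) (x i) = _
    rw [hτs]
  -- the parity of points in the range is constant
  have hpar_const : ∀ x y : V → Bool,
      (∑ i, if conjNet f x i = true then (1 : ZMod 2) else 0) =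
        (∑ i, if conjNet f y i = true then (1 : ZMod 2) else 0) := by
    intro x y
    rcases heo with he | ho
    · have hx : EvenPt (conjNet f x) := by
        have h : conjNet f x ∈ Set.range (conjNet f) := ⟨x, rfl⟩
        rw [he] at h; exact h
      have hy : EvenPt (conjNet f y) := by
        have h : conjNet f y ∈ Set.range (conjNet f) := ⟨y, rfl⟩
        rw [he] at h; exact h
      rw [(aux_evenPt_iff _).1 hx, (aux_evenPt_iff _).1 hy]
    · have hx : ¬ EvenPt (conjNet f x) := by
        have h : conjNet f x ∈ Set.range (conjNet f) := ⟨x, rfl⟩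
        rw [ho] at h; exact h
      have hy : ¬ EvenPt (conjNet f y) := by
        have h : conjNet f y ∈ Set.range (conjNet f) := ⟨y, rfl⟩
        rw [ho] at h; exact h
      have h1 : (∑ i, if conjNet f x i = true then (1 : ZMod 2) else 0) = 1 := by
        rcases aux_zmod2_cases (∑ i, if conjNet f x i = true then (1 : ZMod 2) else 0)
          with h | h
        · exact absurd ((aux_evenPt_iff _).2 h) hx
        · exact h
      have h2 : (∑ i, if conjNet f y i = true then (1 : ZMod 2) else 0) = 1 := by
        rcases aux_zmod2_cases (∑ i, if conjNet f y i = true then (1 : ZMod 2) else 0)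
          with h | h
        · exact absurd ((aux_evenPt_iff _).2 h) hy
        · exact h
      rw [h1, h2]
  -- Step 2: τ is surjective, hence bijective.
  have hsurj : Function.Surjective τ := by
    intro j
    by_contra h
    push_neg at h
    have hc := hpar_const (fun v => decide (v = j)) (fun _ => false)
    have hc2 : (∑ i, if xor (xor (decide (τ i = j)) (s i)) (decide (i = j)) = true
          then (1 : ZMod 2) else 0) =
        (∑ i, if xor (xor (false : Bool) (s i)) (false : Bool) = true
          then (1 : ZMod 2) else 0) := by
      have e1 := hconj (fun v => decide (v = j))
      have e2 := hconj (fun _ => false)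
      calc (∑ i, if xor (xor (decide (τ i = j)) (s i)) (decide (i = j)) = true
              then (1 : ZMod 2) else 0)
          = (∑ i, if conjNet f (fun v => decide (v = j)) i = true then (1 : ZMod 2) else 0) := by
            refine Finset.sum_congr rfl fun i _ => ?_
            rw [e1]
        _ = (∑ i, if conjNet f (fun _ => false) i = true then (1 : ZMod 2) else 0) := hc
        _ = (∑ i, if xor (xor (false : Bool) (s i)) (false : Bool) = true
              then (1 : ZMod 2) else 0) := by
            refine Finset.sum_congr rfl fun i _ => ?_
            rw [e2]
    rw [aux_sum_xor3 Finset.univ (fun i => decide (τ i = j)) s (fun i => decide (i = j)),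
        aux_sum_xor3 Finset.univ (fun _ => false) s (fun _ => false)] at hc2
    have hz : (∑ i, if (decide (τ i = j)) = true then (1 : ZMod 2) else 0) = 0 := by
      refine Finset.sum_eq_zero fun i _ => ?_
      simp [h i]
    have hzf : (∑ _i : V, if (false : Bool) = true then (1 : ZMod 2) else 0) = 0 := by simp
    rw [hz, hzf, aux_sum_single Finset.univ j, if_pos (Finset.mem_univ j)] at hc2
    rw [zero_add] at hc2
    exact absurd (add_left_cancel hc2) (by decide)
  have hbij : Function.Bijective τ :=
    (Fintype.bijective_iff_surjective_and_card τ).2 ⟨hsurj, rfl⟩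
  set σ : Equiv.Perm V := Equiv.ofBijective τ hbij with hσ
  have hστ : ∀ i, σ i = τ i := fun i => rfl
  -- Step 3: σ is a single cycle.
  have hcyc : ∀ i j : V, ∃ n : ℕ, (σ ^ n) i = j := by
    intro i₀ j₀
    by_contra h
    push_neg at h
    have hij : i₀ ≠ j₀ := by
      have := h 0
      simpa using this
    have hnsc : ¬ σ.SameCycle i₀ j₀ := by
      intro hsc
      obtain ⟨n, _, hn⟩ := hsc.exists_pow_eq'
      exact h n hn
    set S : Finset V := Finset.univ.filter (fun v => σ.SameCycle i₀ v) with hS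
    have hiS : i₀ ∈ S :=
      Finset.mem_filter.2 ⟨Finset.mem_univ _, Equiv.Perm.SameCycle.refl σ i₀⟩
    have hjS : j₀ ∉ S := fun hm => hnsc (Finset.mem_filter.1 hm).2
    have hSinv : ∀ v, v ∈ S ↔ σ v ∈ S := by
      intro v
      simp only [hS, Finset.mem_filter, Finset.mem_univ, true_and]
      exact Equiv.Perm.sameCycle_apply_right.symm
    -- the S-parity of every point in the range equals that of s
    have hkey : ∀ x : V → Bool,
        (∑ v ∈ S, if conjNet f x v = true then (1 : ZMod 2) else 0) =
          ∑ v ∈ S, if s v = true then (1 : ZMod 2) else 0 := by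
      intro x
      have h1 : (∑ v ∈ S, if conjNet f x v = true then (1 : ZMod 2) else 0)
          = ∑ v ∈ S, if xor (xor (x (τ v)) (s v)) (x v) = true then (1 : ZMod 2) else 0 := by
        refine Finset.sum_congr rfl fun v _ => ?_
        rw [hconj x]
      rw [h1, aux_sum_xor3 S (fun v => x (τ v)) s x]
      have h2 : (∑ v ∈ S, if x (τ v) = true then (1 : ZMod 2) else 0)
          = ∑ v ∈ S, if x v = true then (1 : ZMod 2) else 0 := by
        refine Finset.sum_equiv σ (fun v => hSinv v) (fun v _ => rfl)
      rw [h2]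
      exact aux_zmod2 _ _
    rcases heo with he | ho
    · -- even case: compare the zero point and the pair {i₀, j₀}
      obtain ⟨x₁, hx₁⟩ : (fun _ : V => false) ∈ Set.range (conjNet f) := by
        rw [he]
        show EvenPt _
        unfold EvenPt
        simp
      obtain ⟨x₂, hx₂⟩ : (fun v : V => decide (v = i₀) || decide (v = j₀)) ∈
          Set.range (conjNet f) := by
        rw [he]
        show EvenPt _
        unfold EvenPt
        have hf : (Finset.univ.filter
            (fun v => ((decide (v = i₀) || decide (v = j₀)) = true))) = {i₀, j₀} := by
          ext v
          simp [Finset.mem_insert]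
        rw [hf, Finset.card_pair hij]
        exact ⟨1, rfl⟩
      have k₁ := hkey x₁
      have k₂ := hkey x₂
      rw [hx₁] at k₁
      rw [hx₂] at k₂
      have k₁' : (∑ v ∈ S, if (false : Bool) = true then (1 : ZMod 2) else 0) =
          ∑ v ∈ S, if s v = true then (1 : ZMod 2) else 0 := k₁
      have k₂' : (∑ v ∈ S, if ((decide (v = i₀) || decide (v = j₀)) = true)
            then (1 : ZMod 2) else 0) =
          ∑ v ∈ S, if s v = true then (1 : ZMod 2) else 0 := k₂
      have z₁ : (∑ v ∈ S, if (false : Bool) = true then (1 : ZMod 2) else 0) = 0 := by simp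
      have z₂ : (∑ v ∈ S, if ((decide (v = i₀) || decide (v = j₀)) = true)
          then (1 : ZMod 2) else 0) = 1 := by
        have hcg : ∀ v ∈ S, (if ((decide (v = i₀) || decide (v = j₀)) = true)
            then (1 : ZMod 2) else 0) = if v = i₀ then 1 else 0 := by
          intro v hv
          by_cases hvi : v = i₀
          · simp [hvi]
          · have hvj : v ≠ j₀ := fun hvj => hjS (hvj ▸ hv)
            simp [hvi, hvj]
        rw [Finset.sum_congr rfl hcg, Finset.sum_ite_eq' S i₀ fun _ => (1 : ZMod 2),
          if_pos hiS]
      rw [z₁] at k₁'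
      rw [z₂] at k₂'
      have : (1 : ZMod 2) = 0 := k₂'.trans k₁'.symm
      exact absurd this (by decide)
    · -- odd case: compare the two singletons {i₀} and {j₀}
      have hodd1 : ∀ a : V, ¬ EvenPt (fun v : V => decide (v = a)) := by
        intro a hE
        unfold EvenPt at hE
        have hf : (Finset.univ.filter (fun v => (decide (v = a) = true))) = {a} := by
          ext v
          simp
        rw [hf, Finset.card_singleton] at hE
        exact (Nat.not_even_iff_odd.2 odd_one) hE
      obtain ⟨x₁, hx₁⟩ : (fun v : V => decide (v = i₀)) ∈ Set.range (conjNet f) := by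
        rw [ho]
        exact hodd1 i₀
      obtain ⟨x₂, hx₂⟩ : (fun v : V => decide (v = j₀)) ∈ Set.range (conjNet f) := by
        rw [ho]
        exact hodd1 j₀
      have k₁ := hkey x₁
      have k₂ := hkey x₂
      rw [hx₁] at k₁
      rw [hx₂] at k₂
      have k₁' : (∑ v ∈ S, if (decide (v = i₀)) = true then (1 : ZMod 2) else 0) =
          ∑ v ∈ S, if s v = true then (1 : ZMod 2) else 0 := k₁
      have k₂' : (∑ v ∈ S, if (decide (v = j₀)) = true then (1 : ZMod 2) else 0) =
          ∑ v ∈ S, if s v = true then (1 : ZMod 2) else 0 := k₂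
      rw [aux_sum_single S i₀, if_pos hiS] at k₁'
      rw [aux_sum_single S j₀, if_neg hjS] at k₂'
      have : (1 : ZMod 2) = 0 := k₁'.trans k₂'.symm
      exact absurd this (by decide)
  -- Step 4: the global interaction graph.
  refine ⟨σ, s, ⟨hcyc, ?_, ?_⟩, ?_, ?_⟩
  · intro i j
    constructor
    · rintro ⟨x, h1, h2⟩
      rw [hτs] at h1 h2
      by_cases hji : j = τ i
      · subst hji
        rw [Function.update_self] at h1
        simp only [Bool.true_xor, Bool.not_eq_true'] at h1
        exact ⟨(hστ i).symm, h1⟩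
      · exfalso
        rw [Function.update_of_ne (fun hh => hji hh.symm)] at h1 h2
        rw [h1] at h2
        exact Bool.noConfusion h2
    · rintro ⟨rfl, hs⟩
      refine ⟨fun _ => false, ?_, ?_⟩
      · rw [hτs, ← hστ i, Function.update_self, hs]
        rfl
      · rw [hτs, ← hστ i, Function.update_self, hs]
        rfl
  · intro i j
    constructor
    · rintro ⟨x, h1, h2⟩
      rw [hτs] at h1 h2
      by_cases hji : j = τ i
      · subst hji
        rw [Function.update_self] at h1
        simp only [Bool.true_xor, Bool.not_eq_false'] at h1
        exact ⟨(hστ i).symm, h1⟩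
      · exfalso
        rw [Function.update_of_ne (fun hh => hji hh.symm)] at h1 h2
        rw [h1] at h2
        exact Bool.noConfusion h2
    · rintro ⟨rfl, hs⟩
      refine ⟨fun _ => false, ?_, ?_⟩
      · rw [hτs, ← hστ i, Function.update_self, hs]
        rfl
      · rw [hτs, ← hστ i, Function.update_self, hs]
        rfl
  · intro he
    have h0 : conjNet f (fun _ => false) = s := by
      funext i
      show xor (f (fun _ : V => false) i) false = s i
      rw [hτs]
      simp
    have hmem : s ∈ Set.range (conjNet f) := ⟨fun _ => false, h0⟩
    rw [he] at hmem
    exact hmem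
  · intro ho
    have h0 : conjNet f (fun _ => false) = s := by
      funext i
      show xor (f (fun _ : V => false) i) false = s i
      rw [hτs]
      simp
    have hmem : s ∈ Set.range (conjNet f) := ⟨fun _ => false, h0⟩
    rw [ho] at hmem
    exact Nat.not_even_iff_odd.1 hmem
end

section
/- Let f be an and-net and suppose there exists x ∈ {0,1}^V with f(x) = x and f(x ⊕ 1) = x ⊕ 1 (both x and its complement are fixed points). Then the signed global interaction graph G(f) has no negative cycle; moreover for any directed path of arcs from vertex i to vertex j, the parity of the number of negative arcs on the path equals x_i ⊕ x_j. -/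
/-- Signed arc `j → i`: positive if the sign bit is `false`, negative if it is `true`. -/
def signedArc {W : Type*} [DecidableEq W] (f : (W → Bool) → (W → Bool))
    (c : Bool) (j i : W) : Prop :=
  if c then globalNeg f j i else globalPos f j i

lemma arc_lemma {V : Type*} [DecidableEq V]
    (f : (V → Bool) → (V → Bool)) (hand : IsAndNet f)
    (x : V → Bool) (hx : f x = x) (hx' : f (fun i => !(x i)) = fun i => !(x i))
    {c : Bool} {j i : V} (h : signedArc f c j i) : x i = xor c (x j) := by
  obtain ⟨pos, neg, hdisj, hf⟩ := hand
  cases c with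
  | false =>
    obtain ⟨y, h1, h2⟩ := h
    -- claim pos j i
    have hpos : pos j i := by
      by_contra hp
      by_cases hn : neg j i
      · have := ((hf _ i).mp h1).2 j hn
        simp [Function.update_self] at this
      · -- f independent of j at i
        have hc := (hf (Function.update y j true) i).mp h1
        have : f (Function.update y j false) i = true := by
          rw [hf]
          refine ⟨fun j' hj' => ?_, fun j' hj' => ?_⟩
          · have hne : j' ≠ j := fun e => hp (e ▸ hj')
            have := hc.1 j' hj'
            simpa [Function.update_of_ne hne] using
              (by simpa [Function.update_of_ne hne] using this)
          · have hne : j' ≠ j := fun e => hn (e ▸ hj')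
            have := hc.2 j' hj'
            simpa [Function.update_of_ne hne] using
              (by simpa [Function.update_of_ne hne] using this)
        rw [this] at h2; exact Bool.noConfusion h2
    cases hxi : x i with
    | true =>
      have hfx : f x i = true := by rw [hx]; exact hxi
      have := ((hf x i).mp hfx).1 j hpos
      simp [hxi, this]
    | false =>
      have hfx : f (fun i => !(x i)) i = true := by rw [hx']; simp [hxi]
      have := ((hf _ i).mp hfx).1 j hpos
      simp at this
      simp [hxi, this]
  | true =>
    obtain ⟨y, h1, h2⟩ := h
    have hneg : neg j i := by
      by_contra hn
      by_cases hp : pos j i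
      · have := ((hf _ i).mp h2).1 j hp
        simp [Function.update_self] at this
      · have hc := (hf (Function.update y j false) i).mp h2
        have : f (Function.update y j true) i = true := by
          rw [hf]
          refine ⟨fun j' hj' => ?_, fun j' hj' => ?_⟩
          · have hne : j' ≠ j := fun e => hp (e ▸ hj')
            have := hc.1 j' hj'
            simpa [Function.update_of_ne hne] using
              (by simpa [Function.update_of_ne hne] using this)
          · have hne : j' ≠ j := fun e => hn (e ▸ hj')
            have := hc.2 j' hj'
            simpa [Function.update_of_ne hne] using
              (by simpa [Function.update_of_ne hne] using this)
        rw [this] at h1; exact Bool.noConfusion h1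
    cases hxi : x i with
    | true =>
      have hfx : f x i = true := by rw [hx]; exact hxi
      have := ((hf x i).mp hfx).2 j hneg
      simp [hxi, this]
    | false =>
      have hfx : f (fun i => !(x i)) i = true := by rw [hx']; simp [hxi]
      have := ((hf _ i).mp hfx).2 j hneg
      simp at this
      simp [hxi, this]

lemma path_eq {V : Type*} [DecidableEq V]
    (f : (V → Bool) → (V → Bool)) (hand : IsAndNet f)
    (x : V → Bool) (hx : f x = x) (hx' : f (fun i => !(x i)) = fun i => !(x i)) :
    ∀ (l : ℕ) (v : ℕ → V) (c : ℕ → Bool),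
      (∀ t < l, signedArc f (c t) (v t) (v (t + 1))) →
      x (v l) = xor (decide (Odd (((Finset.range l).filter (fun t => c t = true)).card)))
        (x (v 0)) := by
  intro l
  induction l with
  | zero => intro v c _; simp
  | succ l ih =>
    intro v c h
    have h1 := ih v c (fun t ht => h t (Nat.lt_succ_of_lt ht))
    have h2 := arc_lemma f hand x hx hx' (h l (Nat.lt_succ_self l))
    rw [h2, h1]
    cases hc : c l
    · simp [Finset.range_add_one, Finset.filter_insert, hc]
    · rw [Finset.range_add_one, Finset.filter_insert, if_pos hc,
        Finset.card_insert_of_notMem (by simp)]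
      simp only [Nat.odd_add_one, decide_not]
      generalize decide (Odd (Finset.filter (fun t => c t = true) (Finset.range l)).card) = d
      cases d <;> cases x (v 0) <;> rfl

open Fin.NatCast

/-- Let `f` be an and-net having both `x` and its complement as fixed points. Then
along every directed path of `G(f)`, the parity of the number of negative arcs equals
`x_i ⊕ x_j` where `i, j` are the endpoints; and `G(f)` has no negative cycle. -/
theorem stmt_19 {V : Type*} [Fintype V] [DecidableEq V]
    (f : (V → Bool) → (V → Bool)) (hand : IsAndNet f)
    (x : V → Bool) (hx : f x = x) (hx' : f (fun i => !(x i)) = fun i => !(x i)) :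
    -- parity of negative arcs along any path
    (∀ (l : ℕ) (v : ℕ → V) (c : ℕ → Bool),
      (∀ t < l, signedArc f (c t) (v t) (v (t + 1))) →
      (Odd (((Finset.range l).filter (fun t => c t = true)).card) ↔
        x (v 0) ≠ x (v l))) ∧
    -- no negative cycle
    ¬ ∃ (k : ℕ) (v : Fin (k + 1) → V) (c : Fin (k + 1) → Bool),
        Function.Injective v ∧ (∀ t, signedArc f (c t) (v t) (v (t + 1))) ∧
        Odd ((Finset.univ.filter (fun t : Fin (k + 1) => c t = true)).card) := by
  have key := path_eq f hand x hx hx'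
  constructor
  · intro l v c h
    have := key l v c h
    rw [this]
    cases hd : decide (Odd (((Finset.range l).filter (fun t => c t = true)).card)) <;>
      simp_all
  · rintro ⟨k, v, c, _, harcs, hodd⟩
    set v' : ℕ → V := fun t => v (t : Fin (k + 1)) with hv'
    set c' : ℕ → Bool := fun t => c (t : Fin (k + 1)) with hc'
    have harcs' : ∀ t < k + 1, signedArc f (c' t) (v' t) (v' (t + 1)) := by
      intro t _
      have : ((t + 1 : ℕ) : Fin (k + 1)) = (t : Fin (k + 1)) + 1 := by push_cast; ring
      simpa [hv', hc', this] using harcs (t : Fin (k + 1))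
    have hcard : (((Finset.range (k + 1)).filter (fun t => c' t = true)).card)
        = ((Finset.univ.filter (fun t : Fin (k + 1) => c t = true)).card) := by
      apply Finset.card_bij (fun t ht => ((⟨t, Finset.mem_range.mp (Finset.mem_filter.mp ht).1⟩ : Fin (k+1))))
      · intro t ht
        have ht' := Finset.mem_filter.mp ht
        have ht1 : t < k + 1 := Finset.mem_range.mp ht'.1
        simp only [Finset.mem_filter, Finset.mem_univ, true_and]
        have : ((t : ℕ) : Fin (k + 1)) = ⟨t, ht1⟩ := by
          ext; simp [Fin.val_cast_of_lt ht1]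
        rw [← this]; exact ht'.2
      · intro a ha b hb hab
        simpa using congrArg Fin.val hab
      · intro i hi
        refine ⟨i.val, ?_, ?_⟩
        · simp only [Finset.mem_filter, Finset.mem_range]
          refine ⟨i.isLt, ?_⟩
          have : ((i.val : ℕ) : Fin (k + 1)) = i := Fin.cast_val_eq_self i
          rw [hc']; simp only [this]
          exact (Finset.mem_filter.mp hi).2
        · ext; simp
    have hve : v' (k + 1) = v' 0 := by
      simp [hv']
    have := key (k + 1) v' c' harcs'
    rw [hve, hcard] at this
    rw [decide_eq_true hodd] at this
    simp at this
end
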